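/- For a real number p > 0, the equation (1+x)^{p+2} = (1-x)^{p+2} has a nonzero solution x in the open unit disc of ℂ if and only if p > 2. (Here z^{p+2} denotes the principal branch of the complex power, which is well defined since (1±x)/|1±x| lies in the right half plane when |x|<1.) -/

import Mathlib

open Complex Metric

lemma arg_one_add_mul_I (t : ℝ) : Complex.arg (1 + (t : ℂ) * Complex.I) = Real.arctan t := by
  have hre : (0:ℝ) < (1 + (t:ℂ) * Complex.I).re := by simp
  have habs : |Complex.arg (1 + (t:ℂ) * Complex.I)| < Real.pi / 2 :=
    Complex.abs_arg_lt_pi_div_two_iff.mpr (Or.inl hre)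
  have htan : Real.tan (Complex.arg (1 + (t:ℂ) * Complex.I)) = t := by
    rw [Complex.tan_arg]; simp
  have h := Real.arctan_tan (abs_lt.mp habs).1 (abs_lt.mp habs).2
  rw [htan] at h
  exact h.symm

theorem power_equation_nonzero_solution_iff (p : ℝ) (hp : 0 < p) :
    (∃ x : ℂ, x ≠ 0 ∧ ‖x‖ < 1 ∧
      (1 + x) ^ ((p : ℂ) + 2) = (1 - x) ^ ((p : ℂ) + 2)) ↔ 2 < p := by
  have hπ := Real.pi_pos
  have hc : ((p : ℂ) + 2) = ((p + 2 : ℝ) : ℂ) := by push_cast; ring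
  constructor
  · rintro ⟨x, hx0, hxlt, heq⟩
    have hre1 : (0:ℝ) < (1 + x).re := by
      have := Complex.abs_re_le_norm x
      simp only [Complex.add_re, Complex.one_re]
      have : |x.re| < 1 := lt_of_le_of_lt this hxlt
      linarith [(abs_lt.mp this).1]
    have hre2 : (0:ℝ) < (1 - x).re := by
      have := Complex.abs_re_le_norm x
      simp only [Complex.sub_re, Complex.one_re]
      have : |x.re| < 1 := lt_of_le_of_lt this hxlt
      linarith [(abs_lt.mp this).2]
    have h1 : (1 + x) ≠ 0 := fun h => by simp [h] at hre1
    have h2 : (1 - x) ≠ 0 := fun h => by simp [h] at hre2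
    rw [Complex.cpow_def_of_ne_zero h1, Complex.cpow_def_of_ne_zero h2] at heq
    obtain ⟨n, hn⟩ := Complex.exp_eq_exp_iff_exists_int.mp heq
    rw [hc] at hn
    -- real parts: |1+x| = |1-x|
    have hnre := congrArg Complex.re hn
    have hnim := congrArg Complex.im hn
    simp [Complex.mul_re, Complex.mul_im, Complex.log_re, Complex.log_im] at hnre hnim
    have habseq : ‖1 + x‖ = ‖1 - x‖ := by
      have hlog : Real.log (‖1 + x‖) = Real.log (‖1 - x‖) := by
        rcases hnre with h | h
        · exact h
        · linarith
      have e1 : (0:ℝ) < ‖1 + x‖ := norm_pos_iff.mpr h1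
      have e2 : (0:ℝ) < ‖1 - x‖ := norm_pos_iff.mpr h2
      calc ‖1 + x‖ = Real.exp (Real.log (‖1 + x‖)) :=
              (Real.exp_log e1).symm
        _ = Real.exp (Real.log (‖1 - x‖)) := by rw [hlog]
        _ = ‖1 - x‖ := Real.exp_log e2
    have hxre : x.re = 0 := by
      have hsq : ‖1 + x‖ ^ 2 = ‖1 - x‖ ^ 2 := by rw [habseq]
      rw [Complex.sq_norm, Complex.sq_norm] at hsq
      simp [Complex.normSq_apply] at hsq
      nlinarith [hsq]
    set t := x.im with ht
    have hxt : x = (t : ℂ) * Complex.I := by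
      apply Complex.ext <;> simp [hxre, ht]
    have htne : t ≠ 0 := by
      intro h; apply hx0; rw [hxt, h]; simp
    have htlt : |t| < 1 := lt_of_le_of_lt (Complex.abs_im_le_norm x) hxlt
    -- imaginary parts
    have harg1 : Complex.arg (1 + x) = Real.arctan t := by rw [hxt]; exact arg_one_add_mul_I t
    have harg2 : Complex.arg (1 - x) = Real.arctan (-t) := by
      have : (1 : ℂ) - x = 1 + ((-t : ℝ) : ℂ) * Complex.I := by rw [hxt]; push_cast; ring
      rw [this]; exact arg_one_add_mul_I (-t)
    rw [harg1, harg2, Real.arctan_neg] at hnim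
    -- hnim : arctan t * (p + 2) = -arctan t * (p + 2) + n * (2 * π)  (up to simp normal form)
    have hkey : 2 * (p + 2) * Real.arctan t = n * (2 * Real.pi) := by linarith
    have hn0 : n ≠ 0 := by
      intro h
      rw [h] at hkey
      simp at hkey
      rcases hkey with h' | h'
      · linarith
      · exact htne h'
    have harctan : |Real.arctan t| < Real.pi / 4 := by
      rw [abs_lt]
      constructor
      · have := Real.arctan_strictMono (show (-1:ℝ) < t from (abs_lt.mp htlt).1)
        rw [show Real.arctan (-1) = -(Real.pi/4) by rw [Real.arctan_neg, Real.arctan_one]] at this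
        linarith
      · have := Real.arctan_strictMono (show t < 1 from (abs_lt.mp htlt).2)
        rw [Real.arctan_one] at this
        linarith
    have h1n : (1:ℝ) ≤ |(n:ℝ)| := by
      have := Int.one_le_abs hn0
      exact_mod_cast this
    have : 2 * Real.pi ≤ |(n:ℝ)| * (2 * Real.pi) := by nlinarith
    have habs2 : |(n:ℝ) * (2 * Real.pi)| = |(n:ℝ)| * (2 * Real.pi) := by
      rw [abs_mul, abs_of_pos (by linarith : (0:ℝ) < 2 * Real.pi)]
    have hlt : |(n:ℝ) * (2 * Real.pi)| < 2 * (p + 2) * (Real.pi / 4) := by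
      rw [← hkey, abs_mul, abs_of_pos (by linarith : (0:ℝ) < 2 * (p + 2))]
      nlinarith
    rw [habs2] at hlt
    nlinarith
  · intro hp2
    set θ := Real.pi / (p + 2) with hθ
    have hθpos : 0 < θ := by positivity
    have hθlt : θ < Real.pi / 4 := by
      apply div_lt_div_of_pos_left hπ (by norm_num) (by linarith)
    set t := Real.tan θ with htdef
    have htpos : 0 < t := Real.tan_pos_of_pos_of_lt_pi_div_two hθpos (by linarith)
    have htlt : t < 1 := by
      have := Real.tan_lt_tan_of_nonneg_of_lt_pi_div_two hθpos.le (by linarith) hθlt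
      rwa [Real.tan_pi_div_four] at this
    refine ⟨(t : ℂ) * Complex.I, ?_, ?_, ?_⟩
    · simp [htpos.ne']
    · simp [abs_of_pos htpos, htlt]
    · have h1 : (1 : ℂ) + (t:ℂ) * Complex.I ≠ 0 := by
        intro h
        have := congrArg Complex.re h
        simp at this
      have h2 : (1 : ℂ) - (t:ℂ) * Complex.I ≠ 0 := by
        intro h
        have := congrArg Complex.re h
        simp at this
      rw [Complex.cpow_def_of_ne_zero h1, Complex.cpow_def_of_ne_zero h2]
      apply Complex.exp_eq_exp_iff_exists_int.mpr
      refine ⟨1, ?_⟩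
      rw [hc]
      have harg1 : Complex.arg (1 + (t:ℂ) * Complex.I) = θ := by
        rw [arg_one_add_mul_I, htdef, Real.arctan_tan (by linarith) (by linarith)]
      have harg2 : Complex.arg (1 - (t:ℂ) * Complex.I) = -θ := by
        have : (1 : ℂ) - (t:ℂ) * Complex.I = 1 + ((-t : ℝ) : ℂ) * Complex.I := by
          push_cast; ring
        rw [this, arg_one_add_mul_I, Real.arctan_neg, htdef,
          Real.arctan_tan (by linarith) (by linarith)]
      have habseq : ‖1 + (t:ℂ) * Complex.I‖ =
          ‖1 - (t:ℂ) * Complex.I‖ := by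
        have : Complex.normSq (1 + (t:ℂ) * Complex.I) =
            Complex.normSq (1 - (t:ℂ) * Complex.I) := by
          simp [Complex.normSq_apply]
        simp only [Complex.norm_def, this]
      have hθeq : θ * (p + 2) = Real.pi := by
        rw [hθ]; field_simp
      apply Complex.ext
      · simp [Complex.mul_re, Complex.log_re, Complex.log_im, habseq]
      · simp [Complex.mul_im, Complex.log_re, Complex.log_im, harg1, harg2, habseq]
        linarith
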